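/- arXiv:1909.08787 — 2 statements merged into one kernel-verified Lean document; each statement's English description precedes it below -/
import Mathlib

section
/- Let S be a nonempty closed subset of a Polish metric space (M, ρ), let π_S be a measurable projection onto S (so ρ(x, π_S(x)) = d(x,S) for all x), and let μ be any probability measure on M with finite second moment whose support is contained in S. Then for any probability measure Q on M with finite second moment, W_2^2(Q, μ) ≥ W_2^2(Q, π_S # Q). -/
open MeasureTheory ENNReal

/-- The set of couplings of two measures: probability measures on the product
with the prescribed marginals. -/
def couplings {α : Type*} [MeasurableSpace α] (μ ν : Measure α) :
    Set (Measure (α × α)) :=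
  {π | IsProbabilityMeasure π ∧ π.map Prod.fst = μ ∧ π.map Prod.snd = ν}

/-- Optimal transport cost between two measures for a cost function `c`. -/
noncomputable def Wcost {α : Type*} [MeasurableSpace α] (c : α → α → ℝ≥0∞)
    (μ ν : Measure α) : ℝ≥0∞ :=
  ⨅ π ∈ couplings μ ν, ∫⁻ p, c p.1 p.2 ∂π

/-- Squared second-order Wasserstein distance. -/
noncomputable def W2sq {α : Type*} [MeasurableSpace α] [PseudoMetricSpace α]
    (μ ν : Measure α) : ℝ≥0∞ :=
  Wcost (fun x y => ENNReal.ofReal (dist x y ^ 2)) μ ν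


/-- Lemma B.2: for a measurable metric projection `π_S` onto a nonempty
closed subset `S` of a Polish space, any probability measure `μ` with finite second
moment supported in `S`, and any probability measure `Q` with finite second moment,
`W_2²(Q, μ) ≥ W_2²(Q, π_S # Q)`. -/
theorem W2sq_ge_W2sq_map_of_support_subset {M : Type*} [MetricSpace M]
    [TopologicalSpace.SeparableSpace M] [CompleteSpace M]
    [MeasurableSpace M] [BorelSpace M]
    (S : Set M) (hSclosed : IsClosed S) (hSne : S.Nonempty)
    (πS : M → M) (hπmeas : Measurable πS) (hπmem : ∀ x, πS x ∈ S)
    (hπproj : ∀ x, dist x (πS x) = Metric.infDist x S)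
    (μ : Measure M) [IsProbabilityMeasure μ] (hμS : μ Sᶜ = 0)
    (hμ : ∀ x₀ : M, ∫⁻ x, ENNReal.ofReal (dist x x₀ ^ 2) ∂μ < ⊤)
    (Q : Measure M) [IsProbabilityMeasure Q]
    (hQ : ∀ x₀ : M, ∫⁻ x, ENNReal.ofReal (dist x x₀ ^ 2) ∂Q < ⊤) :
    W2sq Q μ ≥ W2sq Q (Q.map πS) := by
  have hmg : Measurable fun x : M => (x, πS x) := measurable_id.prodMk hπmeas
  have hcostmeas : Measurable fun p : M × M => ENNReal.ofReal (dist p.1 p.2 ^ 2) := by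
    exact (measurable_dist.pow_const 2).ennreal_ofReal
  have hfmeas : Measurable fun x : M => ENNReal.ofReal (dist x (πS x) ^ 2) := by
    exact ((measurable_id.dist hπmeas).pow_const 2).ennreal_ofReal
  -- Step 1: W2sq Q (Q.map πS) ≤ ∫ dist(x, πS x)² dQ via the coupling (id, πS)#Q
  have step1 : W2sq Q (Q.map πS) ≤ ∫⁻ x, ENNReal.ofReal (dist x (πS x) ^ 2) ∂Q := by
    have hγ : (Q.map fun x => (x, πS x)) ∈ couplings Q (Q.map πS) := by
      refine ⟨Measure.isProbabilityMeasure_map hmg.aemeasurable, ?_, ?_⟩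
      · rw [Measure.map_map measurable_fst hmg]
        exact Measure.map_id
      · rw [Measure.map_map measurable_snd hmg]
        rfl
    calc W2sq Q (Q.map πS) ≤ ∫⁻ p, ENNReal.ofReal (dist p.1 p.2 ^ 2)
            ∂(Q.map fun x => (x, πS x)) := by
          exact iInf₂_le _ hγ
      _ = ∫⁻ x, ENNReal.ofReal (dist x (πS x) ^ 2) ∂Q := by
          rw [lintegral_map hcostmeas hmg]
  -- Step 2: for any coupling π of (Q, μ), the cost is at least ∫ dist(x, πS x)² dQ
  rw [ge_iff_le, W2sq, Wcost]
  refine le_iInf₂ fun π hπ => ?_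
  obtain ⟨hπprob, hπ1, hπ2⟩ := hπ
  refine step1.trans ?_
  have h1 : ∫⁻ x, ENNReal.ofReal (dist x (πS x) ^ 2) ∂Q
      = ∫⁻ p, ENNReal.ofReal (dist p.1 (πS p.1) ^ 2) ∂π := by
    rw [← hπ1, lintegral_map hfmeas measurable_fst]
  rw [h1]
  refine lintegral_mono_ae ?_
  have hae : ∀ᵐ p ∂π, p.2 ∈ S := by
    rw [ae_iff]
    have : {p : M × M | ¬ p.2 ∈ S} = Prod.snd ⁻¹' Sᶜ := rfl
    rw [this, ← Measure.map_apply measurable_snd hSclosed.measurableSet.compl, hπ2, hμS]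
  filter_upwards [hae] with p hp
  refine ENNReal.ofReal_le_ofReal ?_
  have h2 : dist p.1 (πS p.1) ≤ dist p.1 p.2 := by
    rw [hπproj]
    exact Metric.infDist_le_dist_of_mem hp
  exact pow_le_pow_left₀ dist_nonneg h2 2
end

section
/- Fix m ≥ 1, compact Θ ⊂ R^d, integers k_1,…,k_m, M ≥ 1, λ > 0, and true distributions P^1,…,P^m ∈ P_2(Θ). Define f_n(G⃗, H) = Σ_j W_2^2(G_j, P^j_{n_j}) + λ W_2^2(H, (1/m) Σ_j δ_{G_j}) using empirical measures P^j_{n_j}, and f(G⃗, H) the same with P^j in place of P^j_{n_j}. Then | inf f_n^{1/2} − inf f^{1/2} | ≤ Σ_{j=1}^m W_2(P^j_{n_j}, P^j), where the infima are over G_j ∈ O_{k_j}(Θ) and H ∈ E_M(P_2(Θ)). -/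
open MeasureTheory ENNReal

open ProbabilityTheory

section Aux

/-- `x ↦ x^(1/2)` commutes with iInf on ℝ≥0∞. -/
lemma iInf_rpow_half {ι : Sort*} (f : ι → ℝ≥0∞) :
    (⨅ i, f i) ^ (1/2 : ℝ) = ⨅ i, (f i) ^ (1/2 : ℝ) := by
  have h := (ENNReal.orderIsoRpow (1/2) (by norm_num)).map_iInf f
  simp only [ENNReal.orderIsoRpow_apply] at h
  exact h

lemma sq_rpow_half (x : ℝ≥0∞) : (x ^ (1/2 : ℝ)) ^ (2 : ℕ) = x := by
  rw [← ENNReal.rpow_natCast (x ^ (1/2:ℝ)) 2, ← ENNReal.rpow_mul]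
  norm_num

/-- key scalar step: if `√a ≤ √b + w` then `√(a+S) ≤ √(b+S) + w` in `ℝ≥0∞`. -/
lemma rpow_half_add_le (a b w S : ℝ≥0∞) (h : a ^ (1/2:ℝ) ≤ b ^ (1/2:ℝ) + w) :
    (a + S) ^ (1/2:ℝ) ≤ (b + S) ^ (1/2:ℝ) + w := by
  set u := (b + S) ^ (1/2:ℝ) with hu
  set sb := b ^ (1/2:ℝ) with hsb
  have hub : sb ≤ u := ENNReal.rpow_le_rpow le_self_add (by norm_num)
  have ha : a ≤ (sb + w) ^ (2:ℕ) := by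
    calc a = (a ^ (1/2:ℝ)) ^ (2:ℕ) := (sq_rpow_half a).symm
    _ ≤ (sb + w) ^ (2:ℕ) := pow_le_pow_left' h 2
  have key : a + S ≤ (u + w) ^ (2:ℕ) := by
    have h1 : (sb + w) ^ (2:ℕ) = b + (2 * sb * w + w ^ 2) := by
      rw [add_sq, sq_rpow_half]; ring
    have h2 : (u + w) ^ (2:ℕ) = (b + S) + (2 * u * w + w ^ 2) := by
      rw [add_sq, sq_rpow_half]; ring
    rw [h2]
    calc a + S ≤ (b + (2 * sb * w + w ^ 2)) + S := by
          exact add_le_add (le_trans ha (le_of_eq h1)) le_rfl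
    _ = (b + S) + (2 * sb * w + w ^ 2) := by ring
    _ ≤ (b + S) + (2 * u * w + w ^ 2) := by
          gcongr
  calc (a + S) ^ (1/2:ℝ) ≤ ((u + w) ^ (2:ℕ)) ^ (1/2:ℝ) :=
        ENNReal.rpow_le_rpow key (by norm_num)
  _ = u + w := by
        rw [← ENNReal.rpow_natCast (u+w) 2, ← ENNReal.rpow_mul]; norm_num

/-- Finset iteration of the scalar step. -/
lemma rpow_half_sum_add_le {ι : Type*} (s : Finset ι) (A B w : ι → ℝ≥0∞)
    (h : ∀ j ∈ s, A j ^ (1/2:ℝ) ≤ B j ^ (1/2:ℝ) + w j) :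
    ∀ C : ℝ≥0∞, ((∑ j ∈ s, A j) + C) ^ (1/2:ℝ) ≤ ((∑ j ∈ s, B j) + C) ^ (1/2:ℝ) + ∑ j ∈ s, w j := by
  classical
  induction s using Finset.induction_on with
  | empty => intro C; simp
  | @insert a s ha ih =>
    intro C
    rw [Finset.sum_insert ha, Finset.sum_insert ha, Finset.sum_insert ha,
      add_assoc (A a), add_assoc (B a)]
    have h1 : (A a + ((∑ j ∈ s, A j) + C)) ^ (1/2:ℝ)
        ≤ (B a + ((∑ j ∈ s, A j) + C)) ^ (1/2:ℝ) + w a :=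
      rpow_half_add_le _ _ _ _ (h a (Finset.mem_insert_self a s))
    have h2 : ((∑ j ∈ s, A j) + (C + B a)) ^ (1/2:ℝ)
        ≤ ((∑ j ∈ s, B j) + (C + B a)) ^ (1/2:ℝ) + ∑ j ∈ s, w j :=
      ih (fun j hj => h j (Finset.mem_insert_of_mem hj)) (C + B a)
    calc (A a + ((∑ j ∈ s, A j) + C)) ^ (1/2:ℝ)
        ≤ (B a + ((∑ j ∈ s, A j) + C)) ^ (1/2:ℝ) + w a := h1
    _ = ((∑ j ∈ s, A j) + (C + B a)) ^ (1/2:ℝ) + w a := by ring_nf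
    _ ≤ (((∑ j ∈ s, B j) + (C + B a)) ^ (1/2:ℝ) + ∑ j ∈ s, w j) + w a := by
        exact add_le_add h2 le_rfl
    _ = (B a + ((∑ j ∈ s, B j) + C)) ^ (1/2:ℝ) + (w a + ∑ j ∈ s, w j) := by ring_nf

end Aux

section Wasserstein

variable {α : Type*} [MeasurableSpace α] [PseudoMetricSpace α]
  [OpensMeasurableSpace α] [SecondCountableTopology α]

lemma measurable_costfn :
    Measurable (fun p : α × α => ENNReal.ofReal (dist p.1 p.2 ^ 2)) :=
  ENNReal.measurable_ofReal.comp (measurable_dist.pow_const 2)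

lemma prod_mem_couplings (μ ν : Measure α) [IsProbabilityMeasure μ]
    [IsProbabilityMeasure ν] : μ.prod ν ∈ couplings μ ν := by
  refine ⟨inferInstance, ?_, ?_⟩
  · rw [Measure.map_fst_prod]; simp
  · rw [Measure.map_snd_prod]; simp

lemma W2sq_comm_le (μ ν : Measure α) : W2sq μ ν ≤ W2sq ν μ := by
  rw [W2sq, W2sq, Wcost, Wcost]
  refine le_iInf₂ fun π hπ => ?_
  obtain ⟨hp, hf, hs⟩ := hπ
  haveI := hp
  refine iInf₂_le_of_le (π.map Prod.swap) ⟨Measure.isProbabilityMeasure_map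
    measurable_swap.aemeasurable, ?_, ?_⟩ (le_of_eq ?_)
  · rw [Measure.map_map measurable_fst measurable_swap]
    exact hs
  · rw [Measure.map_map measurable_snd measurable_swap]
    exact hf
  · rw [lintegral_map measurable_costfn measurable_swap]
    simp [dist_comm]

lemma W2sq_comm (μ ν : Measure α) : W2sq μ ν = W2sq ν μ :=
  le_antisymm (W2sq_comm_le μ ν) (W2sq_comm_le ν μ)

lemma W2sq_le_diam {Θ : Set α} (hΘm : MeasurableSet Θ) (hb : Bornology.IsBounded Θ)
    (μ ν : Measure α) (hμ : IsProbabilityMeasure μ) (hν : IsProbabilityMeasure ν)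
    (hμs : μ Θᶜ = 0) (hνs : ν Θᶜ = 0) :
    W2sq μ ν ≤ ENNReal.ofReal (Metric.diam Θ ^ 2) := by
  haveI := hμ; haveI := hν
  refine le_trans (iInf₂_le (μ.prod ν) (prod_mem_couplings μ ν)) ?_
  have hae : ∀ᵐ p ∂(μ.prod ν), ENNReal.ofReal (dist p.1 p.2 ^ 2)
      ≤ ENNReal.ofReal (Metric.diam Θ ^ 2) := by
    have hnull : (μ.prod ν) (Θ ×ˢ Θ)ᶜ = 0 := by
      have hsub : (Θ ×ˢ Θ)ᶜ ⊆ (Θᶜ ×ˢ (Set.univ : Set α)) ∪ ((Set.univ : Set α) ×ˢ Θᶜ) := by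
        intro p hp
        simp only [Set.mem_compl_iff, Set.mem_prod, not_and_or] at hp
        rcases hp with h | h
        · exact Or.inl ⟨h, trivial⟩
        · exact Or.inr ⟨trivial, h⟩
      refine measure_mono_null hsub (le_antisymm ?_ zero_le)
      refine le_trans (measure_union_le _ _) ?_
      rw [Measure.prod_prod, Measure.prod_prod, hμs, hνs]
      simp
    rw [MeasureTheory.ae_iff]
    refine measure_mono_null ?_ hnull
    intro p hp
    simp only [Set.mem_setOf_eq, not_le] at hp
    intro hmem
    have hd : dist p.1 p.2 ≤ Metric.diam Θ := Metric.dist_le_diam_of_mem hb hmem.1 hmem.2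
    have hsq : dist p.1 p.2 ^ 2 ≤ Metric.diam Θ ^ 2 := pow_le_pow_left₀ dist_nonneg hd 2
    exact absurd (ENNReal.ofReal_le_ofReal hsq) (not_le.mpr hp)
  calc ∫⁻ p, ENNReal.ofReal (dist p.1 p.2 ^ 2) ∂(μ.prod ν)
      ≤ ∫⁻ _, ENNReal.ofReal (Metric.diam Θ ^ 2) ∂(μ.prod ν) := lintegral_mono_ae hae
  _ = ENNReal.ofReal (Metric.diam Θ ^ 2) := by simp

end Wasserstein

section Triangle

variable {α : Type*} [MeasurableSpace α] [PseudoMetricSpace α]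
  [OpensMeasurableSpace α] [SecondCountableTopology α]
  [StandardBorelSpace α] [Nonempty α]

lemma glue_le {μ ν ρ : Measure α} {π₁ π₂ : Measure (α × α)}
    (h₁ : π₁ ∈ couplings μ ν) (h₂ : π₂ ∈ couplings ν ρ) :
    W2sq μ ρ ^ (1/2:ℝ) ≤
      (∫⁻ p, ENNReal.ofReal (dist p.1 p.2 ^ 2) ∂π₁) ^ (1/2:ℝ) +
      (∫⁻ p, ENNReal.ofReal (dist p.1 p.2 ^ 2) ∂π₂) ^ (1/2:ℝ) := by
  obtain ⟨h₁p, h₁f, h₁s⟩ := h₁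
  obtain ⟨h₂p, h₂f, h₂s⟩ := h₂
  haveI := h₁p; haveI := h₂p
  set σ : Measure (α × α) := π₁.map Prod.swap with hσdef
  haveI : IsProbabilityMeasure σ :=
    Measure.isProbabilityMeasure_map measurable_swap.aemeasurable
  have hσfst : σ.fst = ν := by
    show (π₁.map Prod.swap).map Prod.fst = ν
    rw [Measure.map_map measurable_fst measurable_swap]
    exact h₁s
  have hπ₂fst : π₂.fst = ν := h₂f
  set κ₁ := σ.condKernel with hκ₁def
  set κ₂ := π₂.condKernel with hκ₂def
  have hκ₁ : ν ⊗ₘ κ₁ = σ := by rw [← hσfst]; exact σ.disintegrate _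
  have hκ₂ : ν ⊗ₘ κ₂ = π₂ := by rw [← hπ₂fst]; exact π₂.disintegrate _
  haveI : IsProbabilityMeasure ν := by
    constructor
    rw [← hσfst, Measure.fst_univ]
    exact measure_univ
  set τ : Measure (α × (α × α)) := ν ⊗ₘ (κ₁ ×ₖ κ₂) with hτdef
  haveI : IsProbabilityMeasure τ := by infer_instance
  -- marginal computations
  have hmeas1 : Measurable (fun p : α × (α × α) => (p.1, p.2.1)) :=
    measurable_fst.prodMk (measurable_fst.comp measurable_snd)
  have hmeas2 : Measurable (fun p : α × (α × α) => (p.1, p.2.2)) :=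
    measurable_fst.prodMk (measurable_snd.comp measurable_snd)
  have hT1 : τ.map (fun p => (p.1, p.2.1)) = ν ⊗ₘ κ₁ := by
    ext s hs
    rw [Measure.map_apply hmeas1 hs, Measure.compProd_apply (hmeas1 hs),
      Measure.compProd_apply hs]
    refine lintegral_congr fun y => ?_
    have hset : Prod.mk y ⁻¹' ((fun p : α × (α × α) => (p.1, p.2.1)) ⁻¹' s)
        = (Prod.mk y ⁻¹' s) ×ˢ Set.univ := by
      rw [Set.prod_univ]; rfl
    rw [hset, Kernel.prod_apply, Measure.prod_prod, measure_univ, mul_one]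
  have hT2 : τ.map (fun p => (p.1, p.2.2)) = ν ⊗ₘ κ₂ := by
    ext s hs
    rw [Measure.map_apply hmeas2 hs, Measure.compProd_apply (hmeas2 hs),
      Measure.compProd_apply hs]
    refine lintegral_congr fun y => ?_
    have hset : Prod.mk y ⁻¹' ((fun p : α × (α × α) => (p.1, p.2.2)) ⁻¹' s)
        = Set.univ ×ˢ (Prod.mk y ⁻¹' s) := by
      rw [Set.univ_prod]; rfl
    rw [hset, Kernel.prod_apply, Measure.prod_prod, measure_univ, one_mul]
  set π : Measure (α × α) := τ.map Prod.snd with hπdef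
  haveI : IsProbabilityMeasure π :=
    Measure.isProbabilityMeasure_map measurable_snd.aemeasurable
  have hπfst : π.map Prod.fst = μ := by
    rw [hπdef, Measure.map_map measurable_fst measurable_snd]
    have : (Prod.fst ∘ Prod.snd : α × (α × α) → α)
        = (Prod.snd ∘ fun p : α × (α × α) => (p.1, p.2.1)) := rfl
    rw [this, ← Measure.map_map measurable_snd hmeas1, hT1, hκ₁, hσdef,
      Measure.map_map measurable_snd measurable_swap]
    exact h₁f
  have hπsnd : π.map Prod.snd = ρ := by
    rw [hπdef, Measure.map_map measurable_snd measurable_snd]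
    have : (Prod.snd ∘ Prod.snd : α × (α × α) → α)
        = (Prod.snd ∘ fun p : α × (α × α) => (p.1, p.2.2)) := rfl
    rw [this, ← Measure.map_map measurable_snd hmeas2, hT2, hκ₂]
    exact h₂s
  -- cost computation
  set F : α × (α × α) → ℝ≥0∞ := fun p => ENNReal.ofReal (dist p.2.1 p.1) with hF
  set G : α × (α × α) → ℝ≥0∞ := fun p => ENNReal.ofReal (dist p.1 p.2.2) with hG
  have hFm : AEMeasurable F τ :=
    (ENNReal.measurable_ofReal.comp
      (measurable_dist.comp ((measurable_fst.comp measurable_snd).prodMk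
        measurable_fst))).aemeasurable
  have hGm : AEMeasurable G τ :=
    (ENNReal.measurable_ofReal.comp
      (measurable_dist.comp (measurable_fst.prodMk
        (measurable_snd.comp measurable_snd)))).aemeasurable
  have hcostπ : ∫⁻ p, ENNReal.ofReal (dist p.1 p.2 ^ 2) ∂π
      = ∫⁻ p, ENNReal.ofReal (dist p.2.1 p.2.2 ^ 2) ∂τ := by
    rw [hπdef, lintegral_map measurable_costfn measurable_snd]
  have hpoint : ∀ p : α × (α × α),
      ENNReal.ofReal (dist p.2.1 p.2.2 ^ 2) ≤ ((F + G) p) ^ (2:ℝ) := by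
    intro p
    have htri : dist p.2.1 p.2.2 ≤ dist p.2.1 p.1 + dist p.1 p.2.2 :=
      dist_triangle _ _ _
    have h1 : ENNReal.ofReal (dist p.2.1 p.2.2 ^ 2)
        = ENNReal.ofReal (dist p.2.1 p.2.2) ^ (2:ℝ) := by
      rw [ENNReal.ofReal_pow dist_nonneg, ← ENNReal.rpow_natCast]
      norm_num
    rw [h1]
    refine ENNReal.rpow_le_rpow ?_ (by norm_num)
    calc ENNReal.ofReal (dist p.2.1 p.2.2)
        ≤ ENNReal.ofReal (dist p.2.1 p.1 + dist p.1 p.2.2) :=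
          ENNReal.ofReal_le_ofReal htri
    _ = F p + G p := ENNReal.ofReal_add dist_nonneg dist_nonneg
    _ = (F + G) p := rfl
  have hFint : ∫⁻ p, F p ^ (2:ℝ) ∂τ = ∫⁻ p, ENNReal.ofReal (dist p.1 p.2 ^ 2) ∂π₁ := by
    have heq : ∀ p : α × (α × α), F p ^ (2:ℝ)
        = ((fun q : α × α => ENNReal.ofReal (dist q.2 q.1 ^ 2)) ∘
            (fun p : α × (α × α) => (p.1, p.2.1))) p := by
      intro p
      simp only [hF, Function.comp_apply]
      rw [ENNReal.ofReal_pow dist_nonneg, ← ENNReal.rpow_natCast]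
      norm_num
    have hcm : Measurable (fun q : α × α => ENNReal.ofReal (dist q.2 q.1 ^ 2)) :=
      ENNReal.measurable_ofReal.comp
        ((measurable_dist.comp (measurable_snd.prodMk measurable_fst)).pow_const 2)
    rw [lintegral_congr heq]
    have h1 : ∫⁻ a, ((fun q : α × α => ENNReal.ofReal (dist q.2 q.1 ^ 2)) ∘
        (fun p : α × (α × α) => (p.1, p.2.1))) a ∂τ
        = ∫⁻ q, ENNReal.ofReal (dist q.2 q.1 ^ 2)
            ∂(τ.map (fun p : α × (α × α) => (p.1, p.2.1))) :=
      (lintegral_map hcm hmeas1).symm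
    rw [h1, hT1, hκ₁, hσdef, lintegral_map hcm measurable_swap]
    simp
  have hGint : ∫⁻ p, G p ^ (2:ℝ) ∂τ = ∫⁻ p, ENNReal.ofReal (dist p.1 p.2 ^ 2) ∂π₂ := by
    have heq : ∀ p : α × (α × α), G p ^ (2:ℝ)
        = ((fun q : α × α => ENNReal.ofReal (dist q.1 q.2 ^ 2)) ∘
            (fun p : α × (α × α) => (p.1, p.2.2))) p := by
      intro p
      simp only [hG, Function.comp_apply]
      rw [ENNReal.ofReal_pow dist_nonneg, ← ENNReal.rpow_natCast]
      norm_num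
    rw [lintegral_congr heq]
    have h1 : ∫⁻ a, ((fun q : α × α => ENNReal.ofReal (dist q.1 q.2 ^ 2)) ∘
        (fun p : α × (α × α) => (p.1, p.2.2))) a ∂τ
        = ∫⁻ q, ENNReal.ofReal (dist q.1 q.2 ^ 2)
            ∂(τ.map (fun p : α × (α × α) => (p.1, p.2.2))) :=
      (lintegral_map measurable_costfn hmeas2).symm
    rw [h1, hT2, hκ₂]
  -- put it together
  have hW : W2sq μ ρ ≤ ∫⁻ p, ENNReal.ofReal (dist p.1 p.2 ^ 2) ∂π :=
    iInf₂_le π ⟨inferInstance, hπfst, hπsnd⟩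
  calc W2sq μ ρ ^ (1/2:ℝ)
      ≤ (∫⁻ p, ENNReal.ofReal (dist p.2.1 p.2.2 ^ 2) ∂τ) ^ (1/2:ℝ) := by
        rw [← hcostπ]
        exact ENNReal.rpow_le_rpow hW (by norm_num)
  _ ≤ (∫⁻ p, ((F + G) p) ^ (2:ℝ) ∂τ) ^ (1/2:ℝ) :=
        ENNReal.rpow_le_rpow (lintegral_mono hpoint) (by norm_num)
  _ ≤ (∫⁻ p, F p ^ (2:ℝ) ∂τ) ^ (1/2:ℝ) + (∫⁻ p, G p ^ (2:ℝ) ∂τ) ^ (1/2:ℝ) := by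
        have := ENNReal.lintegral_Lp_add_le hFm hGm (by norm_num : (1:ℝ) ≤ 2)
        norm_num at this ⊢
        exact this
  _ = (∫⁻ p, ENNReal.ofReal (dist p.1 p.2 ^ 2) ∂π₁) ^ (1/2:ℝ) +
      (∫⁻ p, ENNReal.ofReal (dist p.1 p.2 ^ 2) ∂π₂) ^ (1/2:ℝ) := by
        rw [hFint, hGint]

lemma sqW2_triangle (μ ν ρ : Measure α) (hμ : IsProbabilityMeasure μ)
    (hν : IsProbabilityMeasure ν) (hρ : IsProbabilityMeasure ρ) :
    W2sq μ ρ ^ (1/2:ℝ) ≤ W2sq μ ν ^ (1/2:ℝ) + W2sq ν ρ ^ (1/2:ℝ) := by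
  haveI := hμ; haveI := hν; haveI := hρ
  conv_rhs => rw [W2sq, W2sq, Wcost, Wcost]
  rw [iInf_rpow_half, ENNReal.iInf_add]
  refine le_iInf fun π₁ => ?_
  rw [iInf_rpow_half, ENNReal.iInf_add]
  refine le_iInf fun hπ₁ => ?_
  rw [iInf_rpow_half, ENNReal.add_iInf]
  refine le_iInf fun π₂ => ?_
  rw [iInf_rpow_half, ENNReal.add_iInf]
  refine le_iInf fun hπ₂ => ?_
  exact glue_le hπ₁ hπ₂

end Triangle

/-- `O_k(Θ)`: probability measures with at most `k` support points, all in `Θ`. -/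
def OkSet {α : Type*} [MeasurableSpace α] (Θ : Set α) (k : ℕ) : Set (Measure α) :=
  {G | IsProbabilityMeasure G ∧
    ∃ s : Finset α, ↑s ⊆ Θ ∧ s.card ≤ k ∧ G ((↑s : Set α))ᶜ = 0}

/-- `E_M(P_2(Θ))`: probability measures on the space of measures, supported on exactly
`M` atoms, each atom being a probability measure supported in `Θ`. -/
def EMSet {α : Type*} [MeasurableSpace α] (Θ : Set α) (M : ℕ) :
    Set (Measure (Measure α)) :=
  {H | IsProbabilityMeasure H ∧
    ∃ (a : Fin M → Measure α) (w : Fin M → ℝ≥0∞),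
      Function.Injective a ∧ (∀ i, w i ≠ 0) ∧
      (∀ i, IsProbabilityMeasure (a i) ∧ (a i) Θᶜ = 0) ∧
      H = ∑ i, w i • Measure.dirac (a i)}

/-- The MWM objective with data measures `P j`: `Σ_j W_2²(G_j, P_j) + λ W_2²(H, (1/m)Σ_j δ_{G_j})`,
infimized over `G_j ∈ O_{k_j}(Θ)` and `H ∈ E_M(P_2(Θ))`. Here the outer `W_2²` uses
ground cost `W2sq`. -/
noncomputable def mwmInf {α : Type*} [MeasurableSpace α] [PseudoMetricSpace α]
    (Θ : Set α) (m : ℕ) (k : Fin m → ℕ) (M : ℕ) (lam : ℝ)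
    (P : Fin m → Measure α) : ℝ≥0∞ :=
  ⨅ G ∈ {G : Fin m → Measure α | ∀ j, G j ∈ OkSet Θ (k j)},
  ⨅ H ∈ EMSet Θ M,
    (∑ j, W2sq (G j) (P j)) +
      ENNReal.ofReal lam *
        Wcost (fun μ ν => W2sq μ ν) H ((m : ℝ≥0∞)⁻¹ • ∑ j, Measure.dirac (G j))

section Main

variable {α : Type*} [MeasurableSpace α] [PseudoMetricSpace α]
  [OpensMeasurableSpace α] [SecondCountableTopology α]
  [StandardBorelSpace α] [Nonempty α]

lemma mwm_sqrt_le (Θ : Set α) (m : ℕ) (k : Fin m → ℕ) (M : ℕ) (lam : ℝ)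
    (P Q : Fin m → Measure α)
    (hP : ∀ j, IsProbabilityMeasure (P j)) (hQ : ∀ j, IsProbabilityMeasure (Q j)) :
    mwmInf Θ m k M lam Q ^ (1/2:ℝ) ≤ mwmInf Θ m k M lam P ^ (1/2:ℝ)
      + ∑ j, W2sq (Q j) (P j) ^ (1/2:ℝ) := by
  set c := ∑ j, W2sq (Q j) (P j) ^ (1/2:ℝ) with hc
  rw [mwmInf, mwmInf]
  conv_rhs => simp only [iInf_rpow_half, ENNReal.iInf_add]
  refine le_iInf fun G => le_iInf fun hG => le_iInf fun H => le_iInf fun hH => ?_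
  have hle : (⨅ G ∈ {G : Fin m → Measure α | ∀ j, G j ∈ OkSet Θ (k j)},
      ⨅ H ∈ EMSet Θ M, ((∑ j, W2sq (G j) (Q j)) +
        ENNReal.ofReal lam *
          Wcost (fun μ ν => W2sq μ ν) H ((m : ℝ≥0∞)⁻¹ • ∑ j, Measure.dirac (G j)))) ^ (1/2:ℝ)
      ≤ ((∑ j, W2sq (G j) (Q j)) +
        ENNReal.ofReal lam *
          Wcost (fun μ ν => W2sq μ ν) H ((m : ℝ≥0∞)⁻¹ • ∑ j, Measure.dirac (G j))) ^ (1/2:ℝ) := by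
    refine ENNReal.rpow_le_rpow ?_ (by norm_num)
    exact iInf_le_of_le G (iInf_le_of_le hG (iInf_le_of_le H (iInf_le _ hH)))
  refine hle.trans ?_
  refine rpow_half_sum_add_le Finset.univ (fun j => W2sq (G j) (Q j))
    (fun j => W2sq (G j) (P j)) (fun j => W2sq (Q j) (P j) ^ (1/2:ℝ)) (fun j _ => ?_) _
  have htri := sqW2_triangle (G j) (P j) (Q j) (hG j).1 (hP j) (hQ j)
  rwa [W2sq_comm (P j) (Q j)] at htri


end Main

/-- Theorem 4(ii), deterministic bound: for compact `Θ ⊂ ℝ^d`,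
`| (inf f_n)^{1/2} − (inf f)^{1/2} | ≤ Σ_j W_2(P^j_{n_j}, P^j)`. -/
theorem mwm_inf_sqrt_diff_le {d : ℕ} (Θ : Set (EuclideanSpace ℝ (Fin d)))
    (hΘ : IsCompact Θ) (hΘne : Θ.Nonempty)
    (m : ℕ) (hm : 1 ≤ m) (k : Fin m → ℕ) (hk : ∀ j, 1 ≤ k j)
    (M : ℕ) (hM : 1 ≤ M) (lam : ℝ) (hlam : 0 < lam)
    (P Pn : Fin m → Measure (EuclideanSpace ℝ (Fin d)))
    (hP : ∀ j, IsProbabilityMeasure (P j) ∧ (P j) Θᶜ = 0)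
    (hPn : ∀ j, IsProbabilityMeasure (Pn j) ∧ (Pn j) Θᶜ = 0) :
    |((mwmInf Θ m k M lam Pn) ^ (1 / 2 : ℝ)).toReal -
        ((mwmInf Θ m k M lam P) ^ (1 / 2 : ℝ)).toReal| ≤
      ∑ j, ((W2sq (Pn j) (P j)) ^ (1 / 2 : ℝ)).toReal := by
  have hprobP : ∀ j, IsProbabilityMeasure (P j) := fun j => (hP j).1
  have hprobPn : ∀ j, IsProbabilityMeasure (Pn j) := fun j => (hPn j).1
  set a := mwmInf Θ m k M lam Pn ^ (1/2:ℝ) with hadef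
  set b := mwmInf Θ m k M lam P ^ (1/2:ℝ) with hbdef
  set c := ∑ j, W2sq (Pn j) (P j) ^ (1/2:ℝ) with hcdef
  have h1 : a ≤ b + c := mwm_sqrt_le Θ m k M lam P Pn hprobP hprobPn
  have h2 : b ≤ a + c := by
    have h := mwm_sqrt_le Θ m k M lam Pn P hprobPn hprobP
    have hcc : ∑ j, W2sq (P j) (Pn j) ^ (1/2:ℝ) = c := by
      rw [hcdef]
      exact Finset.sum_congr rfl fun j _ => by rw [W2sq_comm]
    rwa [hcc] at h
  have hΘm : MeasurableSet Θ := hΘ.isClosed.measurableSet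
  have hΘb : Bornology.IsBounded Θ := hΘ.isBounded
  have hterm : ∀ j, W2sq (Pn j) (P j) ^ (1/2:ℝ) ≠ ⊤ := fun j =>
    ENNReal.rpow_ne_top_of_nonneg (by norm_num)
      (ne_top_of_le_ne_top ENNReal.ofReal_ne_top
        (W2sq_le_diam hΘm hΘb _ _ (hprobPn j) (hprobP j) (hPn j).2 (hP j).2))
  have hcne : c ≠ ⊤ := by
    rw [hcdef]
    exact (ENNReal.sum_lt_top.mpr fun j _ => lt_top_iff_ne_top.mpr (hterm j)).ne
  have hctr : c.toReal = ∑ j, (W2sq (Pn j) (P j) ^ (1/2:ℝ)).toReal := by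
    rw [hcdef]
    exact ENNReal.toReal_sum fun j _ => hterm j
  by_cases ha : a = ⊤
  · have hb : b = ⊤ := by
      by_contra hb
      exact (ne_top_of_le_ne_top (ENNReal.add_ne_top.mpr ⟨hb, hcne⟩) h1) ha
    rw [ha, hb]
    simp only [ENNReal.toReal_top, sub_self, abs_zero]
    exact Finset.sum_nonneg fun j _ => ENNReal.toReal_nonneg
  · have hb : b ≠ ⊤ := ne_top_of_le_ne_top (ENNReal.add_ne_top.mpr ⟨ha, hcne⟩) h2
    rw [← hctr, abs_sub_le_iff]
    constructor
    · have := ENNReal.toReal_mono (ENNReal.add_ne_top.mpr ⟨hb, hcne⟩) h1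
      rw [ENNReal.toReal_add hb hcne] at this
      linarith
    · have := ENNReal.toReal_mono (ENNReal.add_ne_top.mpr ⟨ha, hcne⟩) h2
      rw [ENNReal.toReal_add ha hcne] at this
      linarith
end
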